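/- Let G be a d-regular bipartite graph with an edge e = {x,y}, and let G' be the n-fold cyclic cover of G along e: take n disjoint copies of G, delete all copies of e, and connect each copy of x to the copy of y in the cyclically next copy of G. If p(e) = 1/(x₀+1) is the probability that a uniform random perfect matching of G contains e, then for each new edge e' of G', p(e') = p(e)^n / (p(e)^n + (1-p(e))^n) = 1/(x₀^n + 1). -/

import Mathlib

set_option linter.unusedSectionVars false
set_option maxHeartbeats 1000000

/-- `p(e)` for the edge `e = (u,v)`: the fraction of perfect matchings of the bipartite
graph `E` (viewed as bijections `U ≃ V` using only edges of `E`) containing `e`. -/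
noncomputable def pmProb {U V : Type*} (E : U → V → Prop) (u : U) (v : V) : ℝ :=
  ({σ : U ≃ V | (∀ x : U, E x (σ x)) ∧ σ u = v}.ncard : ℝ) /
    ({σ : U ≃ V | ∀ x : U, E x (σ x)}.ncard : ℝ)

/-- The `n`-fold cyclic cover of the bipartite graph `E` along the edge `(x,y)`:
take `n` disjoint copies of the graph (indexed by `ZMod n`), delete all copies of the
edge `(x,y)`, and join the copy of `x` in layer `i` to the copy of `y` in layer `i+1`. -/
def coverRel {U V : Type*} (E : U → V → Prop) (x : U) (y : V) (n : ℕ) :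
    U × ZMod n → V × ZMod n → Prop :=
  fun p q =>
    (E p.1 q.1 ∧ ¬(p.1 = x ∧ q.1 = y) ∧ q.2 = p.2) ∨
    (p.1 = x ∧ q.1 = y ∧ q.2 = p.2 + 1)

open Finset in
lemma exists_pm_through_edge {U V : Type*} [Fintype U] [Fintype V]
    (d : ℕ) (E : U → V → Prop)
    (hregU : ∀ u : U, ({v : V | E u v}.ncard) = d)
    (hregV : ∀ v : V, ({u : U | E u v}.ncard) = d)
    (hcard : Fintype.card U = Fintype.card V)
    (x : U) (y : V) (hxy : E x y) :
    ∃ σ : U ≃ V, (∀ u : U, E u (σ u)) ∧ σ x = y := by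
  classical
  set Nb : U → Finset V := fun u => univ.filter (fun v => E u v) with hNbdef
  set Nb' : V → Finset U := fun v => univ.filter (fun u => E u v) with hNb'def
  have hNbcard : ∀ u, (Nb u).card = d := by
    intro u
    have := hregU u
    rwa [Set.ncard_eq_toFinset_card', Set.toFinset_setOf] at this
  have hNb'card : ∀ v, (Nb' v).card = d := by
    intro v
    have := hregV v
    rwa [Set.ncard_eq_toFinset_card', Set.toFinset_setOf] at this
  have hyNbx : y ∈ Nb x := by simp [hNbdef, hxy]
  have hd : 0 < d := by
    have h2 := Finset.card_pos.2 ⟨y, hyNbx⟩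
    rw [hNbcard x] at h2; exact h2
  obtain ⟨d', rfl⟩ : ∃ d', d = d' + 1 := ⟨d - 1, by omega⟩
  set F : U → Finset V := fun u => (Nb u).erase y with hFdef
  have key : ∀ s : Finset U, x ∉ s → s.card ≤ (s.biUnion F).card := by
    intro s hxs
    set N := s.biUnion F with hNdef
    have hsub : ∀ u ∈ s, F u ⊆ N := fun u hu => subset_biUnion_of_mem F hu
    have e1 : ∀ u ∈ s, (F u).card = ∑ v ∈ N, (if v ∈ F u then 1 else 0) := by
      intro u hu
      rw [← Finset.card_filter]
      congr 1
      rw [Finset.filter_mem_eq_inter, Finset.inter_eq_right.2 (hsub u hu)]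
    have e2 : ∑ u ∈ s, (F u).card ≤ (d' + 1) * N.card := by
      calc ∑ u ∈ s, (F u).card = ∑ u ∈ s, ∑ v ∈ N, (if v ∈ F u then 1 else 0) :=
            Finset.sum_congr rfl e1
        _ = ∑ v ∈ N, ∑ u ∈ s, (if v ∈ F u then 1 else 0) := Finset.sum_comm
        _ = ∑ v ∈ N, (s.filter (fun u => v ∈ F u)).card := by
            refine Finset.sum_congr rfl fun v _ => ?_
            rw [Finset.card_filter]
        _ ≤ ∑ v ∈ N, (d' + 1) := by
            refine Finset.sum_le_sum fun v _ => ?_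
            rw [← hNb'card v]
            refine Finset.card_le_card fun u hu => ?_
            simp only [Finset.mem_filter] at hu
            have h3 : v ∈ Nb u := Finset.mem_of_mem_erase hu.2
            simp only [hNbdef, Finset.mem_filter, Finset.mem_univ, true_and] at h3
            simp [hNb'def, h3]
        _ = (d' + 1) * N.card := by rw [Finset.sum_const, smul_eq_mul, mul_comm]
    have e3 : ∀ u ∈ s, (Nb u).card ≤ (F u).card + (if y ∈ Nb u then 1 else 0) := by
      intro u _
      by_cases h : y ∈ Nb u
      · rw [if_pos h, hFdef]
        rw [Finset.card_erase_of_mem h]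
        omega
      · rw [if_neg h]
        show #(Nb u) ≤ #((Nb u).erase y) + 0
        rw [Finset.erase_eq_of_notMem h]
        omega
    have c1 : ∑ u ∈ s, (if y ∈ Nb u then 1 else 0) ≤ d' := by
      rw [← Finset.card_filter]
      have hss : s.filter (fun u => y ∈ Nb u) ⊆ (Nb' y).erase x := by
        intro u hu
        simp only [Finset.mem_filter] at hu
        refine Finset.mem_erase.2 ⟨?_, ?_⟩
        · rintro rfl; exact hxs hu.1
        · have := hu.2
          simp only [hNbdef, Finset.mem_filter, Finset.mem_univ, true_and] at this
          simp [hNb'def, this]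
      calc (s.filter (fun u => y ∈ Nb u)).card ≤ ((Nb' y).erase x).card :=
            Finset.card_le_card hss
        _ = d' := by
            rw [Finset.card_erase_of_mem (by simp [hNb'def, hxy]), hNb'card]
            omega
    have e4 : (d' + 1) * s.card ≤ (∑ u ∈ s, (F u).card) + d' := by
      calc (d' + 1) * s.card = ∑ u ∈ s, (Nb u).card := by
            rw [Finset.sum_congr rfl (fun u _ => hNbcard u), Finset.sum_const, smul_eq_mul,
              mul_comm]
        _ ≤ ∑ u ∈ s, ((F u).card + (if y ∈ Nb u then 1 else 0)) := Finset.sum_le_sum e3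
        _ = (∑ u ∈ s, (F u).card) + ∑ u ∈ s, (if y ∈ Nb u then 1 else 0) :=
            Finset.sum_add_distrib
        _ ≤ _ := by omega
    by_contra hcon
    push_neg at hcon
    have h5 : (d' + 1) * (N.card + 1) ≤ (d' + 1) * s.card := Nat.mul_le_mul_left _ hcon
    nlinarith [e2, e4, h5]
  -- Hall's theorem
  set t' : U → Finset V := fun u => if u = x then {y} else F u with ht'def
  have hall : ∀ s : Finset U, s.card ≤ (s.biUnion t').card := by
    intro s
    by_cases hx : x ∈ s
    · have hrw : s.biUnion t' = insert y ((s.erase x).biUnion F) := by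
        conv_lhs => rw [← Finset.insert_erase hx]
        rw [Finset.biUnion_insert]
        rw [Finset.biUnion_congr rfl (fun u hu => if_neg (Finset.ne_of_mem_erase hu))]
        rw [ht'def]; simp only [if_pos rfl]
        ext v; simp [or_comm]
      rw [hrw]
      have hy : y ∉ (s.erase x).biUnion F := by
        intro hy
        obtain ⟨u, _, hu2⟩ := Finset.mem_biUnion.1 hy
        exact (Finset.mem_erase.1 hu2).1 rfl
      rw [Finset.card_insert_of_notMem hy]
      have := key (s.erase x) (fun h => (Finset.mem_erase.1 h).1 rfl)
      have hc := Finset.card_erase_of_mem hx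
      have hpos := Finset.card_pos.2 ⟨x, hx⟩
      omega
    · rw [Finset.biUnion_congr rfl (fun u hu => if_neg (fun h => hx (by rwa [h] at hu)))]
      exact key s hx
  obtain ⟨f, hfinj, hft⟩ := (Finset.all_card_le_biUnion_card_iff_exists_injective t').1 hall
  have hfx : f x = y := by
    have := hft x
    rw [ht'def] at this; simp at this; exact this
  have hbij : Function.Bijective f := (Fintype.bijective_iff_injective_and_card f).2 ⟨hfinj, hcard⟩
  refine ⟨Equiv.ofBijective f hbij, fun u => ?_, hfx⟩
  show E u (f u)
  by_cases h : u = x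
  · subst h; rw [hfx]; exact hxy
  · have := hft u
    rw [ht'def] at this; simp only [if_neg h] at this
    have h3 : f u ∈ Nb u := Finset.mem_of_mem_erase this
    simp only [hNbdef, Finset.mem_filter, Finset.mem_univ, true_and] at h3
    exact h3

section lifts

variable {U V : Type*} {n : ℕ}

noncomputable def liftB (f : ZMod n → (U ≃ V)) : U × ZMod n ≃ V × ZMod n where
  toFun p := (f p.2 p.1, p.2)
  invFun q := ((f q.2).symm q.1, q.2)
  left_inv p := by simp
  right_inv q := by simp

open Classical in
noncomputable def liftA (x : U) (y : V) (f : ZMod n → (U ≃ V)) (hf : ∀ j, f j x = y) :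
    U × ZMod n ≃ V × ZMod n where
  toFun p := if p.1 = x then (y, p.2 + 1) else (f p.2 p.1, p.2)
  invFun q := if q.1 = y then (x, q.2 - 1) else ((f q.2).symm q.1, q.2)
  left_inv p := by
    obtain ⟨u, i⟩ := p
    by_cases h : u = x
    · subst h; simp
    · have h2 : f i u ≠ y := fun h2 => h ((f i).injective (by rw [h2, hf i]))
      simp [h, h2]
  right_inv q := by
    obtain ⟨v, j⟩ := q
    by_cases h : v = y
    · subst h; simp
    · have h2 : (f j).symm v ≠ x := fun h2 => h (by rw [← hf j, ← h2, Equiv.apply_symm_apply])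
      simp [h, h2]

open Classical in
@[simp] lemma liftA_apply (x : U) (y : V) (f : ZMod n → (U ≃ V)) (hf : ∀ j, f j x = y)
    (p : U × ZMod n) :
    liftA x y f hf p = if p.1 = x then (y, p.2 + 1) else (f p.2 p.1, p.2) := rfl

@[simp] lemma liftB_apply (f : ZMod n → (U ≃ V)) (p : U × ZMod n) :
    liftB f p = (f p.2 p.1, p.2) := rfl

end lifts

section dich

variable {U V : Type*} [Fintype U] [Fintype V] {n : ℕ} [NeZero n]
  {E : U → V → Prop} {x : U} {y : V}

lemma cover_up (hcard : Fintype.card U = Fintype.card V)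
    (τ : U × ZMod n ≃ V × ZMod n) (hτ : ∀ p, coverRel E x y n p (τ p))
    (j : ZMod n) (hP : τ (x, j) = (y, j + 1)) : τ (x, j + 1) = (y, j + 1 + 1) := by
  by_contra hn
  have sec : ∀ u : U, (τ (u, j + 1)).2 = j + 1 := by
    intro u
    rcases hτ (u, j + 1) with ⟨_, _, h⟩ | ⟨h1, h2, h3⟩
    · exact h
    · exfalso
      apply hn
      have h1' : u = x := h1
      subst h1'
      exact Prod.ext_iff.2 ⟨h2, h3⟩
  have hny : ∀ u : U, (τ (u, j + 1)).1 ≠ y := by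
    intro u h1
    have h2 : τ (u, j + 1) = τ (x, j) := by
      rw [hP]; exact Prod.ext_iff.2 ⟨h1, sec u⟩
    have h3 := τ.injective h2
    rw [Prod.mk.injEq] at h3
    obtain ⟨h4, h5⟩ := h3
    exact hn (by rw [h5]; exact hP)
  have hinj : Function.Injective (fun o : Option U => o.elim y (fun u => (τ (u, j + 1)).1)) := by
    rintro (_ | u) (_ | u') heq
    · rfl
    · exact absurd heq.symm (hny u')
    · exact absurd heq (hny u)
    · simp only [Option.elim] at heq
      have : τ (u, j + 1) = τ (u', j + 1) := Prod.ext_iff.2 ⟨heq, by rw [sec u, sec u']⟩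
      have := τ.injective this
      rw [Prod.ext_iff] at this
      exact congrArg _ this.1
  have hle := Fintype.card_le_of_injective _ hinj
  rw [Fintype.card_option] at hle
  omega

lemma cover_all_of (hcard : Fintype.card U = Fintype.card V)
    (τ : U × ZMod n ≃ V × ZMod n) (hτ : ∀ p, coverRel E x y n p (τ p))
    (j₀ : ZMod n) (h0 : τ (x, j₀) = (y, j₀ + 1)) (j : ZMod n) : τ (x, j) = (y, j + 1) := by
  have key : ∀ k : ℕ, τ (x, j₀ + (k : ZMod n)) = (y, j₀ + (k : ZMod n) + 1) := by
    intro k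
    induction k with
    | zero => simpa using h0
    | succ m ih =>
        have h := cover_up hcard τ hτ (j₀ + (m : ZMod n)) ih
        have e : (((m + 1 : ℕ)) : ZMod n) = (m : ZMod n) + 1 := by push_cast; ring
        rw [e, ← add_assoc]
        exact h
  have hv : (((j - j₀).val : ℕ) : ZMod n) = j - j₀ := ZMod.natCast_rightInverse _
  have h2 := key (j - j₀).val
  rw [hv] at h2
  have h3 : j₀ + (j - j₀) = j := by ring
  rwa [h3] at h2

end dich

section count

variable {U V : Type*} [Fintype U] [Fintype V] {n : ℕ} [NeZero n]
  {E : U → V → Prop} {x : U} {y : V}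

open Classical in
lemma card_allA (hcard : Fintype.card U = Fintype.card V) (hxy : E x y) :
    Nat.card {τ : U × ZMod n ≃ V × ZMod n //
        (∀ p, coverRel E x y n p (τ p)) ∧ ∀ j, τ (x, j) = (y, j + 1)}
      = Nat.card {σ : U ≃ V // (∀ u, E u (σ u)) ∧ σ x = y} ^ n := by
  have h1 : Nat.card (ZMod n → {σ : U ≃ V // (∀ u, E u (σ u)) ∧ σ x = y})
      = Nat.card {σ : U ≃ V // (∀ u, E u (σ u)) ∧ σ x = y} ^ n := by
    rw [Nat.card_fun, Nat.card_zmod]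
  rw [← h1]
  have hmem : ∀ f : ZMod n → {σ : U ≃ V // (∀ u, E u (σ u)) ∧ σ x = y},
      (∀ p, coverRel E x y n p (liftA x y (fun j => (f j).1) (fun j => (f j).2.2) p)) ∧
      ∀ j, liftA x y (fun j => (f j).1) (fun j => (f j).2.2) (x, j) = (y, j + 1) := by
    intro f
    constructor
    · rintro ⟨u, i⟩
      by_cases h : u = x
      · subst h
        right
        exact ⟨rfl, by simp, by simp⟩
      · left
        refine ⟨?_, ?_, ?_⟩
        · simp only [liftA_apply, if_neg h]
          exact (f i).2.1 u
        · simp [h]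
        · simp [h]
    · intro j; simp
  apply Nat.card_congr
  refine (Equiv.ofBijective (fun f => ⟨_, hmem f⟩) ⟨?_, ?_⟩).symm
  · intro f f' heq
    have heq2 : ∀ p, liftA x y (fun j => (f j).1) (fun j => (f j).2.2) p
        = liftA x y (fun j => (f' j).1) (fun j => (f' j).2.2) p := by
      intro p
      have h3 := congrArg Subtype.val heq
      exact DFunLike.congr_fun h3 p
    funext j
    apply Subtype.ext
    apply Equiv.ext
    intro u
    by_cases h : u = x
    · subst h; rw [(f j).2.2, (f' j).2.2]
    · have h3 := heq2 (u, j)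
      simp only [liftA_apply, if_neg h] at h3
      exact (Prod.ext_iff.1 h3).1
  · rintro ⟨τ, hτ, hall⟩
    have hsec : ∀ (u : U) (j : ZMod n), u ≠ x → (τ (u, j)).2 = j ∧ (τ (u, j)).1 ≠ y := by
      intro u j hu
      have hsnd : (τ (u, j)).2 = j := by
        rcases hτ (u, j) with ⟨_, _, h⟩ | ⟨h1, _, _⟩
        · exact h
        · exact absurd h1 hu
      refine ⟨hsnd, fun h1 => ?_⟩
      have h2 : τ (u, j) = τ (x, j - 1) := by
        rw [hall (j - 1), sub_add_cancel]
        exact Prod.ext_iff.2 ⟨h1, hsnd⟩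
      have h3 := τ.injective h2
      rw [Prod.mk.injEq] at h3
      exact hu h3.1
    have hbij : ∀ j : ZMod n, Function.Bijective (fun u => (τ (u, j)).1) := by
      intro j
      constructor
      · intro u u' h
        by_cases h1 : u = x <;> by_cases h2 : u' = x
        · rw [h1, h2]
        · exfalso
          apply (hsec u' j h2).2
          simp only at h
          rw [← h, h1, hall j]
        · exfalso
          apply (hsec u j h1).2
          simp only at h
          rw [h, h2, hall j]
        · have h4 : τ (u, j) = τ (u', j) :=
            Prod.ext_iff.2 ⟨h, by rw [(hsec u j h1).1, (hsec u' j h2).1]⟩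
          have h5 := τ.injective h4
          rw [Prod.mk.injEq] at h5
          exact h5.1
      · intro v
        by_cases h : v = y
        · exact ⟨x, by show (τ (x, j)).1 = v; rw [hall j, h]⟩
        · have hp2 : τ (τ.symm (v, j)) = (v, j) := τ.apply_symm_apply _
          rcases hτ (τ.symm (v, j)) with ⟨_, _, hsnd⟩ | ⟨_, h2, _⟩
          · refine ⟨(τ.symm (v, j)).1, ?_⟩
            rw [hp2] at hsnd
            have h6 : ((τ.symm (v, j)).1, j) = τ.symm (v, j) :=
              Prod.ext_iff.2 ⟨rfl, hsnd⟩
            show (τ ((τ.symm (v, j)).1, j)).1 = v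
            rw [h6, hp2]
          · exfalso
            rw [hp2] at h2
            exact h h2
    have hmemσ : ∀ j : ZMod n,
        (∀ u, E u ((Equiv.ofBijective _ (hbij j)) u)) ∧ (Equiv.ofBijective _ (hbij j)) x = y := by
      intro j
      constructor
      · intro u
        show E u (τ (u, j)).1
        rcases hτ (u, j) with ⟨h, _, _⟩ | ⟨h1, h2, _⟩
        · exact h
        · have h1' : u = x := h1
          rw [h2, h1']
          exact hxy
      · show (τ (x, j)).1 = y
        rw [hall j]
    refine ⟨fun j => ⟨Equiv.ofBijective _ (hbij j), hmemσ j⟩, ?_⟩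
    apply Subtype.ext
    apply Equiv.ext
    rintro ⟨u, i⟩
    by_cases h : u = x
    · subst h
      simp [hall i]
    · simp only [liftA_apply, if_neg h, Equiv.ofBijective_apply]
      exact Prod.ext_iff.2 ⟨rfl, ((hsec u i h).1).symm⟩

lemma card_noneB (hcard : Fintype.card U = Fintype.card V) (hxy : E x y) :
    Nat.card {τ : U × ZMod n ≃ V × ZMod n //
        (∀ p, coverRel E x y n p (τ p)) ∧ ∀ j, τ (x, j) ≠ (y, j + 1)}
      = Nat.card {σ : U ≃ V // (∀ u, E u (σ u)) ∧ σ x ≠ y} ^ n := by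
  classical
  have h1 : Nat.card (ZMod n → {σ : U ≃ V // (∀ u, E u (σ u)) ∧ σ x ≠ y})
      = Nat.card {σ : U ≃ V // (∀ u, E u (σ u)) ∧ σ x ≠ y} ^ n := by
    rw [Nat.card_fun, Nat.card_zmod]
  rw [← h1]
  have hmem : ∀ f : ZMod n → {σ : U ≃ V // (∀ u, E u (σ u)) ∧ σ x ≠ y},
      (∀ p, coverRel E x y n p (liftB (fun j => (f j).1) p)) ∧
      ∀ j, liftB (fun j => (f j).1) (x, j) ≠ (y, j + 1) := by
    intro f
    constructor
    · rintro ⟨u, i⟩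
      left
      refine ⟨(f i).2.1 u, ?_, rfl⟩
      rintro ⟨rfl, h2⟩
      exact (f i).2.2 h2
    · intro j heq
      simp only [liftB_apply] at heq
      rw [Prod.mk.injEq] at heq
      exact (f j).2.2 heq.1
  apply Nat.card_congr
  refine (Equiv.ofBijective (fun f => ⟨_, hmem f⟩) ⟨?_, ?_⟩).symm
  · intro f f' heq
    have heq2 : ∀ p, liftB (fun j => (f j).1) p = liftB (fun j => (f' j).1) p := by
      intro p
      have h3 := congrArg Subtype.val heq
      exact DFunLike.congr_fun h3 p
    funext j
    apply Subtype.ext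
    apply Equiv.ext
    intro u
    have h3 := heq2 (u, j)
    simp only [liftB_apply] at h3
    exact (Prod.ext_iff.1 h3).1
  · rintro ⟨τ, hτ, hnone⟩
    have hsec : ∀ (u : U) (j : ZMod n), (τ (u, j)).2 = j ∧ ¬(u = x ∧ (τ (u, j)).1 = y) := by
      intro u j
      rcases hτ (u, j) with ⟨_, h2, h3⟩ | ⟨h1, h2, h3⟩
      · exact ⟨h3, h2⟩
      · exfalso
        apply hnone j
        have h1' : u = x := h1
        rw [← h1']
        exact Prod.ext_iff.2 ⟨h2, h3⟩
    have hbij : ∀ j : ZMod n, Function.Bijective (fun u => (τ (u, j)).1) := by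
      intro j
      constructor
      · intro u u' h
        have h4 : τ (u, j) = τ (u', j) :=
          Prod.ext_iff.2 ⟨h, by rw [(hsec u j).1, (hsec u' j).1]⟩
        have h5 := τ.injective h4
        rw [Prod.mk.injEq] at h5
        exact h5.1
      · intro v
        have hp2 : τ (τ.symm (v, j)) = (v, j) := τ.apply_symm_apply _
        rcases hτ (τ.symm (v, j)) with ⟨_, _, hsnd⟩ | ⟨h1, h2, h3⟩
        · refine ⟨(τ.symm (v, j)).1, ?_⟩
          rw [hp2] at hsnd
          have h6 : ((τ.symm (v, j)).1, j) = τ.symm (v, j) :=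
            Prod.ext_iff.2 ⟨rfl, hsnd⟩
          show (τ ((τ.symm (v, j)).1, j)).1 = v
          rw [h6, hp2]
        · exfalso
          apply hnone (τ.symm (v, j)).2
          have h7 : (x, (τ.symm (v, j)).2) = τ.symm (v, j) :=
            Prod.ext_iff.2 ⟨h1.symm, rfl⟩
          rw [h7, hp2]
          rw [hp2] at h2 h3
          exact Prod.ext_iff.2 ⟨h2, h3⟩
    have hmemσ : ∀ j : ZMod n,
        (∀ u, E u ((Equiv.ofBijective _ (hbij j)) u)) ∧ (Equiv.ofBijective _ (hbij j)) x ≠ y := by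
      intro j
      constructor
      · intro u
        show E u (τ (u, j)).1
        rcases hτ (u, j) with ⟨h, _, _⟩ | ⟨h1, h2, h3⟩
        · exact h
        · exfalso
          apply hnone j
          have h1' : u = x := h1
          rw [← h1']
          exact Prod.ext_iff.2 ⟨h2, h3⟩
      · show (τ (x, j)).1 ≠ y
        intro h
        exact (hsec x j).2 ⟨rfl, h⟩
    refine ⟨fun j => ⟨Equiv.ofBijective _ (hbij j), hmemσ j⟩, ?_⟩
    apply Subtype.ext
    apply Equiv.ext
    rintro ⟨u, i⟩
    simp only [liftB_apply, Equiv.ofBijective_apply]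
    exact Prod.ext_iff.2 ⟨rfl, ((hsec u i).1).symm⟩

end count

/-- If `G` is a `d`-regular bipartite graph with an edge `e = (x,y)` with
`p(e) = 1/(x₀+1)`, then in the `n`-fold cyclic cover each new edge `e'` satisfies
`p(e') = p(e)ⁿ/(p(e)ⁿ + (1-p(e))ⁿ) = 1/(x₀ⁿ + 1)`. -/
theorem pmProb_cyclic_cover {U V : Type*} [Fintype U] [Fintype V]
    (d n : ℕ) (hn : 1 ≤ n) (E : U → V → Prop)
    (hregU : ∀ u : U, ({v : V | E u v}.ncard) = d)
    (hregV : ∀ v : V, ({u : U | E u v}.ncard) = d)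
    (hpm : ∃ σ : U ≃ V, ∀ u : U, E u (σ u))
    (x : U) (y : V) (hxy : E x y)
    (x₀ : ℝ) (hp : pmProb E x y = 1 / (x₀ + 1)) :
    ∀ i : ZMod n,
      pmProb (coverRel E x y n) (x, i) (y, i + 1) =
          pmProb E x y ^ n / (pmProb E x y ^ n + (1 - pmProb E x y) ^ n) ∧
      pmProb (coverRel E x y n) (x, i) (y, i + 1) = 1 / (x₀ ^ n + 1) := by
  classical
  have : NeZero n := ⟨by omega⟩
  obtain ⟨σ₀, hσ₀⟩ := hpm
  have hcard : Fintype.card U = Fintype.card V := Fintype.card_congr σ₀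
  intro i
  set a := {σ : U ≃ V | (∀ u, E u (σ u)) ∧ σ x = y}.ncard with ha
  set b := {σ : U ≃ V | (∀ u, E u (σ u)) ∧ σ x ≠ y}.ncard with hb
  obtain ⟨σ₁, hσ₁, hσ₁x⟩ := exists_pm_through_edge d E hregU hregV hcard x y hxy
  have hapos : 0 < a := by
    rw [ha]
    exact (Set.ncard_pos (Set.toFinite _)).2 ⟨σ₁, hσ₁, hσ₁x⟩
  have hM : {σ : U ≃ V | ∀ u, E u (σ u)}.ncard = a + b := by
    rw [ha, hb, ← Set.ncard_union_eq ?_ (Set.toFinite _) (Set.toFinite _)]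
    · congr 1
      ext σ
      simp only [Set.mem_setOf_eq, Set.mem_union]
      tauto
    · rw [Set.disjoint_left]
      rintro σ ⟨_, h1⟩ ⟨_, h2⟩
      exact h2 h1
  have hAi : {τ : U × ZMod n ≃ V × ZMod n |
        (∀ p, coverRel E x y n p (τ p)) ∧ τ (x, i) = (y, i + 1)}
      = {τ | (∀ p, coverRel E x y n p (τ p)) ∧ ∀ j, τ (x, j) = (y, j + 1)} := by
    ext τ
    simp only [Set.mem_setOf_eq]
    exact ⟨fun ⟨h1, h2⟩ => ⟨h1, cover_all_of hcard τ h1 i h2⟩, fun ⟨h1, h2⟩ => ⟨h1, h2 i⟩⟩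
  have hnum : ({τ : U × ZMod n ≃ V × ZMod n |
        (∀ p, coverRel E x y n p (τ p)) ∧ τ (x, i) = (y, i + 1)}).ncard = a ^ n := by
    rw [hAi, ha, ← Nat.card_coe_set_eq, ← Nat.card_coe_set_eq]
    exact card_allA hcard hxy
  have hPMsplit : {τ : U × ZMod n ≃ V × ZMod n | ∀ p, coverRel E x y n p (τ p)}
      = {τ | (∀ p, coverRel E x y n p (τ p)) ∧ ∀ j, τ (x, j) = (y, j + 1)}
        ∪ {τ | (∀ p, coverRel E x y n p (τ p)) ∧ ∀ j, τ (x, j) ≠ (y, j + 1)} := by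
    ext τ
    simp only [Set.mem_setOf_eq, Set.mem_union]
    constructor
    · intro h
      by_cases h2 : τ (x, i) = (y, i + 1)
      · exact Or.inl ⟨h, cover_all_of hcard τ h i h2⟩
      · exact Or.inr ⟨h, fun j hj => h2 (cover_all_of hcard τ h j hj i)⟩
    · rintro (⟨h, _⟩ | ⟨h, _⟩) <;> exact h
  have hden : ({τ : U × ZMod n ≃ V × ZMod n | ∀ p, coverRel E x y n p (τ p)}).ncard
      = a ^ n + b ^ n := by
    rw [hPMsplit, Set.ncard_union_eq ?_ (Set.toFinite _) (Set.toFinite _)]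
    · congr 1
      · rw [ha, ← Nat.card_coe_set_eq, ← Nat.card_coe_set_eq]
        exact card_allA hcard hxy
      · rw [hb, ← Nat.card_coe_set_eq, ← Nat.card_coe_set_eq]
        exact card_noneB hcard hxy
    · rw [Set.disjoint_left]
      rintro τ ⟨_, h1⟩ ⟨_, h2⟩
      exact h2 i (h1 i)
  have hpE : pmProb E x y = (a : ℝ) / ((a : ℝ) + (b : ℝ)) := by
    rw [pmProb, hM]
    push_cast
    rfl
  have hpC : pmProb (coverRel E x y n) (x, i) (y, i + 1)
      = ((a : ℝ)) ^ n / (((a : ℝ)) ^ n + ((b : ℝ)) ^ n) := by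
    rw [pmProb, hnum, hden]
    push_cast
    rfl
  have haR : (0 : ℝ) < (a : ℝ) := by exact_mod_cast hapos
  have hbR : (0 : ℝ) ≤ (b : ℝ) := Nat.cast_nonneg b
  have hsum : (0 : ℝ) < (a : ℝ) + (b : ℝ) := by linarith
  have hsumpow : (0 : ℝ) < ((a : ℝ)) ^ n + ((b : ℝ)) ^ n := by positivity
  constructor
  · rw [hpC, hpE]
    have h1m : 1 - (a : ℝ) / ((a : ℝ) + (b : ℝ)) = (b : ℝ) / ((a : ℝ) + (b : ℝ)) := by
      field_simp
      ring
    rw [h1m, div_pow, div_pow, ← add_div]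
    rw [div_div_div_cancel_right₀]
    positivity
  · have hx01 : x₀ + 1 ≠ 0 := by
      intro h
      rw [hpE, h, div_zero] at hp
      rcases div_eq_zero_iff.1 hp with h2 | h2
      · linarith
      · linarith
    have hx0 : x₀ = (b : ℝ) / (a : ℝ) := by
      rw [hpE] at hp
      field_simp at hp
      field_simp
      linarith
    rw [hpC, hx0, div_pow]
    rw [div_add' _ _ _ (by positivity), one_div, eq_comm, inv_eq_iff_eq_inv, eq_comm, inv_div]
    rw [div_eq_div_iff (by positivity) (by positivity)]
    ring
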